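/- Let a < b and let f : [a,b] → ℝ be a bounded càdlàg function. Then lim_{n→∞} ((b−a)/n) · Σ_{k=0}^{n−1} f(a + k(b−a)/n) = ∫_a^b f(t) dt, where the right-hand side is the Lebesgue integral. -/

import Mathlib

open Filter Topology MeasureTheory


lemma countable_of_left_separated {s : Set ℝ}
    (h : ∀ t ∈ s, ∃ u, u < t ∧ ∀ x ∈ s, x ∉ Set.Ioo u t) : s.Countable := by
  -- choose a rational in each gap
  have key : ∀ t ∈ s, ∃ q : ℚ, (q : ℝ) < t ∧ ∀ x ∈ s, x ∉ Set.Ioo (q : ℝ) t := by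
    intro t ht
    obtain ⟨u, hu, hdis⟩ := h t ht
    obtain ⟨q, hq1, hq2⟩ := exists_rat_btwn hu
    exact ⟨q, hq2, fun x hx hmem => hdis x hx ⟨lt_trans hq1 hmem.1, hmem.2⟩⟩
  choose! q hq1 hq2 using key
  have hinj : Set.InjOn q s := by
    intro t1 h1 t2 h2 heq
    by_contra hne
    rcases lt_or_gt_of_ne hne with hlt | hlt
    · exact hq2 t2 h2 t1 h1 ⟨heq ▸ hq1 t1 h1, hlt⟩
    · exact hq2 t1 h1 t2 h2 ⟨heq ▸ hq1 t2 h2, hlt⟩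
  exact Set.countable_of_injective_of_countable_image hinj (Set.to_countable _)


lemma jump_set_eps_countable (a b : ℝ) (f : ℝ → ℝ) (ε : ℝ) (hε : 0 < ε)
    (hright : ∀ t ∈ Set.Ico a b, Tendsto f (𝓝[>] t) (𝓝 (f t))) :
    {t : ℝ | t ∈ Set.Ioo a b ∧ ∃ L : ℝ, Tendsto f (𝓝[<] t) (𝓝 L) ∧ ε ≤ |f t - L|}.Countable := by
  set s := {t : ℝ | t ∈ Set.Ioo a b ∧ ∃ L : ℝ, Tendsto f (𝓝[<] t) (𝓝 L) ∧ ε ≤ |f t - L|}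
  apply countable_of_left_separated
  rintro t ⟨htab, L, hL, hjump⟩
  -- eventually |f s - L| < ε/3 on a left neighborhood
  have h3 : ∀ᶠ x in 𝓝[<] t, |f x - L| < ε / 3 := by
    have := Metric.tendsto_nhds.1 hL (ε/3) (by linarith)
    simpa [Real.dist_eq] using this
  obtain ⟨u, hu, hball⟩ := (nhdsLT_basis_of_exists_lt ⟨a, htab.1⟩).eventually_iff.1 h3
  refine ⟨max u a, max_lt hu htab.1, ?_⟩
  rintro t' ⟨ht'1, L', hL', hjump'⟩ ⟨hm1, hm2⟩
  have hut' : u < t' := lt_of_le_of_lt (le_max_left _ _) hm1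
  have hat' : a < t' := lt_of_le_of_lt (le_max_right _ _) hm1
  -- f values on Ioo u t are ε/3-close to L
  have hval : ∀ x ∈ Set.Ioo u t, |f x - L| < ε / 3 := fun x hx => hball hx
  -- left limit L' of f at t' is within ε/3 of L
  have hL'close : |L' - L| ≤ ε / 3 := by
    have hne : (𝓝[<] t').NeBot := inferInstance
    have hev : ∀ᶠ x in 𝓝[<] t', |f x - L| ≤ ε / 3 := by
      filter_upwards [Ioo_mem_nhdsLT_of_mem ⟨hut', le_refl t'⟩] with x hx
      exact le_of_lt (hval x ⟨hx.1, lt_trans hx.2 hm2⟩)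
    have : Tendsto (fun x => |f x - L|) (𝓝[<] t') (𝓝 (|L' - L|)) :=
      ((hL'.sub_const L).abs)
    exact le_of_tendsto this hev
  -- f t' (right limit) is within ε/3 of L
  have hft'close : |f t' - L| ≤ ε / 3 := by
    have hr := hright t' ⟨le_of_lt hat', lt_trans hm2 htab.2⟩
    have hev : ∀ᶠ x in 𝓝[>] t', |f x - L| ≤ ε / 3 := by
      filter_upwards [Ioo_mem_nhdsGT_of_mem ⟨le_refl t', hm2⟩] with x hx
      exact le_of_lt (hval x ⟨lt_trans hut' hx.1, hx.2⟩)
    have : Tendsto (fun x => |f x - L|) (𝓝[>] t') (𝓝 (|f t' - L|)) :=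
      ((hr.sub_const L).abs)
    exact le_of_tendsto this hev
  -- but |f t' - L'| ≥ ε, and the unique left limit L' ... contradiction
  have : |f t' - L'| ≤ 2 * ε / 3 := by
    calc |f t' - L'| ≤ |f t' - L| + |L - L'| := abs_sub_le _ _ _
    _ ≤ ε/3 + ε/3 := add_le_add hft'close (by rwa [abs_sub_comm])
    _ = 2 * ε / 3 := by ring
  linarith


noncomputable def riemannStep (a b : ℝ) (f : ℝ → ℝ) (n : ℕ) (t : ℝ) : ℝ :=
  ∑ k ∈ Finset.range n, Set.indicator
    (Set.Ioc (a + k * ((b - a) / n)) (a + (k + 1) * ((b - a) / n)))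
    (fun _ => f (a + k * ((b - a) / n))) t

lemma riemannStep_measurable (a b : ℝ) (f : ℝ → ℝ) (n : ℕ) :
    Measurable (riemannStep a b f n) := by
  apply Finset.measurable_sum
  intro k _
  exact (measurable_const.indicator measurableSet_Ioc)

lemma riemannStep_integral (a b : ℝ) (f : ℝ → ℝ) (n : ℕ) (hab : a ≤ b) :
    ∫ t in Set.Ioc a b, riemannStep a b f n t =
      ((b - a) / n) * ∑ k ∈ Finset.range n, f (a + k * ((b - a) / n)) := by
  rcases Nat.eq_zero_or_pos n with rfl | hn
  · simp [riemannStep]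
  set δ := (b - a) / n with hδ
  have hδ0 : 0 ≤ δ := div_nonneg (by linarith) (Nat.cast_nonneg n)
  have hint : ∀ k ∈ Finset.range n, IntegrableOn
      (Set.indicator (Set.Ioc (a + k * δ) (a + (k + 1) * δ)) (fun _ => f (a + k * δ)))
      (Set.Ioc a b) := by
    intro k _
    exact (integrable_indicator_iff measurableSet_Ioc).2
      (integrableOn_const (measure_lt_top _ _).ne)
  unfold riemannStep
  rw [integral_finset_sum _ hint]
  have hsub : ∀ k ∈ Finset.range n,
      Set.Ioc (a + k * δ) (a + (k + 1) * δ) ⊆ Set.Ioc a b := by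
    intro k hk
    apply Set.Ioc_subset_Ioc
    · nlinarith [Nat.cast_nonneg (α := ℝ) k]
    · have hk' : (k : ℝ) + 1 ≤ n := by exact_mod_cast Finset.mem_range.1 hk
      have : ((k : ℝ) + 1) * δ ≤ (n : ℝ) * δ := by nlinarith
      have hnδ : (n : ℝ) * δ = b - a := by
        rw [hδ]; field_simp [((Nat.cast_pos (α := ℝ)).2 hn).ne']
      linarith
  have hterm : ∀ k ∈ Finset.range n,
      ∫ t in Set.Ioc a b, Set.indicator (Set.Ioc (a + k * δ) (a + (k + 1) * δ))
        (fun _ => f (a + k * δ)) t = δ * f (a + k * δ) := by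
    intro k hk
    rw [integral_indicator measurableSet_Ioc, Measure.restrict_restrict measurableSet_Ioc,
      Set.inter_eq_self_of_subset_left (hsub k hk), setIntegral_const]
    rw [Real.volume_real_Ioc_of_le (by linarith [hδ0] : a + k*δ ≤ a + (k+1)*δ), smul_eq_mul]
    ring
  rw [Finset.sum_congr rfl hterm, Finset.mul_sum]

lemma riemannStep_eq (a b : ℝ) (f : ℝ → ℝ) (n : ℕ) (hn : 0 < n) (hab : a < b)
    {t : ℝ} (ht : t ∈ Set.Ioc a b) :
    ∃ k : ℕ, k < n ∧ riemannStep a b f n t = f (a + k * ((b - a) / n)) ∧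
      t - (b - a) / n ≤ a + k * ((b - a) / n) ∧ a + k * ((b - a) / n) < t := by
  set δ := (b - a) / n with hδ
  have hn' : (0 : ℝ) < n := Nat.cast_pos.2 hn
  have hδ0 : 0 < δ := div_pos (by linarith [ht.1, ht.2]) hn'
  set r := (t - a) / δ with hr
  have hr0 : 0 < r := div_pos (by linarith [ht.1]) hδ0
  have hrn : r ≤ n := by
    rw [hr, div_le_iff₀ hδ0]
    have : (n : ℝ) * δ = b - a := by rw [hδ]; field_simp [hn'.ne']
    linarith [ht.2]
  set c := ⌈r⌉ with hc
  have hc1 : 1 ≤ c := Int.ceil_pos.2 hr0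
  have hcn : c ≤ n := Int.ceil_le.2 (by exact_mod_cast hrn)
  set k := (c - 1).toNat with hk
  have hkc : (k : ℤ) = c - 1 := Int.toNat_of_nonneg (by omega)
  have hkR : (k : ℝ) = (c : ℝ) - 1 := by exact_mod_cast hkc
  have hkn : k < n := by omega
  have hlow : (k : ℝ) < r := by
    rw [hkR]
    have := Int.ceil_lt_add_one r
    push_cast at this ⊢
    linarith
  have hhigh : r ≤ (k : ℝ) + 1 := by
    rw [hkR]
    have := Int.le_ceil r
    push_cast at this ⊢
    linarith
  have hmem : t ∈ Set.Ioc (a + k * δ) (a + (k + 1) * δ) := by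
    constructor
    · have : (k : ℝ) * δ < t - a := by
        rw [hr] at hlow
        calc (k:ℝ) * δ < ((t-a)/δ) * δ := by nlinarith
        _ = t - a := by field_simp
      linarith
    · have : t - a ≤ ((k : ℝ) + 1) * δ := by
        rw [hr] at hhigh
        calc t - a = ((t-a)/δ) * δ := by field_simp
        _ ≤ ((k:ℝ)+1) * δ := by nlinarith
      linarith
  refine ⟨k, hkn, ?_, by linarith [hmem.2], hmem.1⟩
  unfold riemannStep
  rw [Finset.sum_eq_single_of_mem k (Finset.mem_range.2 hkn)]
  · rw [Set.indicator_of_mem hmem]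
  · intro j hj hjk
    apply Set.indicator_of_notMem
    rcases lt_or_gt_of_ne hjk with h | h
    · -- j < k : upper end a+(j+1)δ ≤ a+kδ < t
      intro hmem'
      have : (j : ℝ) + 1 ≤ k := by exact_mod_cast h
      have : a + ((j:ℝ)+1) * δ ≤ a + k * δ := by nlinarith
      linarith [hmem'.2, hmem.1]
    · -- j > k : lower end a+jδ ≥ a+(k+1)δ ≥ t
      intro hmem'
      have : (k : ℝ) + 1 ≤ j := by exact_mod_cast h
      have : a + ((k:ℝ)+1) * δ ≤ a + j * δ := by nlinarith
      linarith [hmem'.1, hmem.2]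


lemma riemannStep_bound (a b : ℝ) (f : ℝ → ℝ) (n : ℕ) (hab : a < b) {M : ℝ}
    (hM : ∀ t ∈ Set.Icc a b, |f t| ≤ M) {t : ℝ} (ht : t ∈ Set.Ioc a b) :
    |riemannStep a b f n t| ≤ M := by
  have hM0 : 0 ≤ M := le_trans (abs_nonneg _) (hM a ⟨le_refl a, hab.le⟩)
  rcases Nat.eq_zero_or_pos n with rfl | hn
  · simpa [riemannStep] using hM0
  obtain ⟨k, hkn, heq, h1, h2⟩ := riemannStep_eq a b f n hn hab ht
  rw [heq]
  have hk0 : (0:ℝ) ≤ (k:ℝ) := Nat.cast_nonneg k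
  have hd0 : (0:ℝ) ≤ (b - a) / n := div_nonneg (by linarith) (Nat.cast_nonneg n)
  exact hM _ ⟨by nlinarith, by linarith [ht.2]⟩

lemma riemannStep_tendsto (a b : ℝ) (f : ℝ → ℝ) (hab : a < b) {t : ℝ}
    (ht : t ∈ Set.Ioc a b) (hcont : Tendsto f (𝓝[<] t) (𝓝 (f t))) :
    Tendsto (fun n : ℕ => riemannStep a b f n t) atTop (𝓝 (f t)) := by
  rw [Metric.tendsto_atTop]
  intro ε hε
  have h3 : ∀ᶠ x in 𝓝[<] t, dist (f x) (f t) < ε := Metric.tendsto_nhds.1 hcont ε hε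
  obtain ⟨u, hu, hball⟩ := (nhdsLT_basis_of_exists_lt ⟨a, ht.1⟩).eventually_iff.1 h3
  -- choose N with (b-a)/N < t - u and N ≥ 1
  obtain ⟨N, hN⟩ := exists_nat_gt ((b - a) / (t - u))
  refine ⟨max N 1, fun n hn => ?_⟩
  have hn1 : 0 < n := lt_of_lt_of_le (by norm_num) (le_trans (le_max_right N 1) hn)
  have hnN : (N : ℝ) ≤ n := by exact_mod_cast le_trans (le_max_left N 1) hn
  have htu : 0 < t - u := by linarith
  have hδ : (b - a) / n < t - u := by
    have hn' : (0 : ℝ) < n := by exact_mod_cast hn1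
    rw [div_lt_iff₀ hn']
    have h1 : (b - a) / (t - u) < n := lt_of_lt_of_le hN hnN
    calc b - a = ((b - a)/(t-u)) * (t - u) := by field_simp
    _ < (n : ℝ) * (t - u) := by nlinarith
    _ = t - u + ((n:ℝ) - 1) * (t - u) := by ring
    _ ≤ _ := by nlinarith [show (1:ℝ) ≤ n by exact_mod_cast hn1]
  obtain ⟨k, hkn, heq, h1, h2⟩ := riemannStep_eq a b f n hn1 hab ht
  rw [heq]
  exact hball ⟨by linarith, h2⟩

lemma jump_set_countable (a b : ℝ) (f : ℝ → ℝ)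
    (hright : ∀ t ∈ Set.Ico a b, Tendsto f (𝓝[>] t) (𝓝 (f t)))
    (hleft : ∀ t ∈ Set.Ioc a b, ∃ L : ℝ, Tendsto f (𝓝[<] t) (𝓝 L)) :
    {t : ℝ | t ∈ Set.Ioo a b ∧ ¬ Tendsto f (𝓝[<] t) (𝓝 (f t))}.Countable := by
  apply Set.Countable.mono ?_
    (Set.countable_iUnion (fun m : ℕ => jump_set_eps_countable a b f (1/(m+1))
      (by positivity) hright))
  rintro t ⟨htm, hnt⟩
  obtain ⟨L, hL⟩ := hleft t ⟨htm.1, htm.2.le⟩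
  have hne : f t ≠ L := fun h => hnt (h ▸ hL)
  have hpos : 0 < |f t - L| := abs_pos.2 (sub_ne_zero.2 hne)
  obtain ⟨m, hm⟩ := exists_nat_one_div_lt hpos
  exact Set.mem_iUnion.2 ⟨m, htm, L, hL, by push_cast at hm ⊢; linarith⟩


/-- For a bounded càdlàg function `f : [a,b] → ℝ`, the left Riemann sums converge to the
Lebesgue integral: `lim_n ((b−a)/n) Σ_{k=0}^{n−1} f(a + k(b−a)/n) = ∫_a^b f`. -/
theorem riemann_sums_tendsto_integral_of_cadlag (a b : ℝ) (hab : a < b) (f : ℝ → ℝ)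
    (hbdd : ∃ M : ℝ, ∀ t ∈ Set.Icc a b, |f t| ≤ M)
    (hright : ∀ t ∈ Set.Ico a b, Tendsto f (𝓝[>] t) (𝓝 (f t)))
    (hleft : ∀ t ∈ Set.Ioc a b, ∃ L : ℝ, Tendsto f (𝓝[<] t) (𝓝 L)) :
    Tendsto (fun n : ℕ => ((b - a) / n) * ∑ k ∈ Finset.range n, f (a + k * (b - a) / n))
      atTop (𝓝 (∫ t in a..b, f t)) := by
  obtain ⟨M, hM⟩ := hbdd
  set μ := volume.restrict (Set.Ioc a b) with hμ
  have hmem : ∀ᵐ t ∂μ, t ∈ Set.Ioc a b := ae_restrict_mem measurableSet_Ioc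
  have hNnull : μ {t : ℝ | t ∈ Set.Ioo a b ∧ ¬ Tendsto f (𝓝[<] t) (𝓝 (f t))} = 0 := by
    have hc := jump_set_countable a b f hright hleft
    have h1 : volume {t : ℝ | t ∈ Set.Ioo a b ∧ ¬ Tendsto f (𝓝[<] t) (𝓝 (f t))} = 0 :=
      hc.measure_zero _
    exact le_antisymm (le_trans (Measure.restrict_le_self _) h1.le) (by simp)
  have hN : ∀ᵐ t ∂μ, ¬ (t ∈ Set.Ioo a b ∧ ¬ Tendsto f (𝓝[<] t) (𝓝 (f t))) := by
    rw [ae_iff]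
    convert hNnull using 2
    ext t
    simp [Set.mem_Ioo, and_assoc]
  have hbnull : μ {b} = 0 :=
    le_antisymm (le_trans (Measure.restrict_le_self _) (by simp)) (by simp)
  have hbae : ∀ᵐ t ∂μ, t ≠ b := by
    rw [ae_iff]; simpa using hbnull
  have h_lim : ∀ᵐ t ∂μ, Tendsto (fun n : ℕ => riemannStep a b f n t) atTop (𝓝 (f t)) := by
    filter_upwards [hmem, hN, hbae] with t h1 h2 h3
    have hIoo : t ∈ Set.Ioo a b := ⟨h1.1, lt_of_le_of_ne h1.2 h3⟩
    have hcont : Tendsto f (𝓝[<] t) (𝓝 (f t)) := by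
      by_contra hn; exact h2 ⟨hIoo, hn⟩
    exact riemannStep_tendsto a b f hab h1 hcont
  have h_bound : ∀ n : ℕ, ∀ᵐ t ∂μ, ‖riemannStep a b f n t‖ ≤ M := by
    intro n
    filter_upwards [hmem] with t h1
    rw [Real.norm_eq_abs]
    exact riemannStep_bound a b f n hab hM h1
  have hbint : Integrable (fun _ : ℝ => M) μ :=
    integrableOn_const measure_Ioc_lt_top.ne
  have hconv := MeasureTheory.tendsto_integral_of_dominated_convergence
    (μ := μ) (F := fun n t => riemannStep a b f n t) (f := f) (fun _ => M)
    (fun n => (riemannStep_measurable a b f n).aestronglyMeasurable)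
    hbint h_bound h_lim
  rw [intervalIntegral.integral_of_le hab.le]
  refine hconv.congr fun n => ?_
  rw [show ∫ t, riemannStep a b f n t ∂μ = ∫ t in Set.Ioc a b, riemannStep a b f n t from rfl,
    riemannStep_integral a b f n hab.le]
  congr 1
  exact Finset.sum_congr rfl fun k _ => by rw [mul_div_assoc]
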